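/- Let X be Gaussian with mean λ₁ and standard deviation λ₂ ≥ 0, p ∈ (0.5, 1), and suppose 0 ≤ λ₂ˡ ≤ λ₂. If P(X ≤ 0) ≥ p, then λ₁ + F⁻¹(p)·λ₂ˡ ≤ 0. -/

import Mathlib

open MeasureTheory ProbabilityTheory

lemma std_half : cdf (gaussianReal 0 1) 0 = 1/2 := by
  set μ := gaussianReal 0 1 with hμ
  have inst : IsProbabilityMeasure μ := by rw [hμ]; infer_instance
  have hmap : μ.map (fun x => (-1 : ℝ) * x) = μ := by
    have := gaussianReal_map_const_mul (μ := 0) (v := 1) (-1)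
    simpa using this
  have h1 : μ (Set.Iic 0) = μ (Set.Ici 0) := by
    conv_lhs => rw [← hmap]
    rw [Measure.map_apply (by fun_prop) measurableSet_Iic]
    congr 1
    ext x
    simp
  have h0 : μ {(0 : ℝ)} = 0 := by
    refine gaussianReal_absolutelyContinuous 0 (by norm_num) ?_
    simp
  have h3 : μ (Set.Ici 0) = μ (Set.Ioi 0) + μ {0} := by
    rw [← measure_union (by simp [Set.disjoint_left]; exact fun a ha => ha.ne') (measurableSet_singleton 0)]
    congr 1
    ext x; simp [le_iff_lt_or_eq, or_comm]
  have h4 : μ (Set.Iic 0) = μ (Set.Ioi 0) := by rw [h1, h3, h0, add_zero]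
  have h2 : μ (Set.Iic 0) + μ (Set.Ioi 0) = 1 := by
    rw [← measure_union (by simp [Set.disjoint_left]) measurableSet_Ioi]
    simp [Set.Iic_union_Ioi]
  rw [← h4] at h2
  have hfin : μ (Set.Iic 0) ≠ ⊤ := measure_ne_top μ _
  have := congrArg ENNReal.toReal h2
  rw [ENNReal.toReal_add hfin hfin, ENNReal.toReal_one] at this
  rw [cdf_eq_real, measureReal_def]
  linarith

/-- The quantile function (generalized inverse of the CDF) of the standard normal
distribution `N(0,1)`. -/
noncomputable def stdNormalQuantile (p : ℝ) : ℝ :=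
  sInf {x : ℝ | p ≤ cdf (gaussianReal 0 1) x}

theorem gaussian_chance_constraint_over_approx_high_p
    {Ω : Type*} [MeasurableSpace Ω] (P : Measure Ω) [IsProbabilityMeasure P]
    (X : Ω → ℝ) (lam1 lam2 lam2l p : ℝ) (hlam2 : 0 ≤ lam2)
    (hp : p ∈ Set.Ioo (0.5 : ℝ) 1)
    (hX : Measure.map X P = gaussianReal lam1 ⟨lam2 ^ 2, sq_nonneg lam2⟩)
    (hlb : 0 ≤ lam2l) (hub : lam2l ≤ lam2)
    (hsat : p ≤ (P {ω | X ω ≤ 0}).toReal) :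
    lam1 + stdNormalQuantile p * lam2l ≤ 0 := by
  obtain ⟨hp1, hp2⟩ := hp
  have hp0 : (0 : ℝ) < p := by norm_num at hp1 ⊢; linarith
  -- X is AEMeasurable
  have hXm : AEMeasurable X P := by
    by_contra h
    rw [Measure.map_of_not_aemeasurable h] at hX
    have : (gaussianReal lam1 ⟨lam2 ^ 2, sq_nonneg lam2⟩) Set.univ = 1 :=
      @measure_univ _ _ _ (instIsProbabilityMeasureGaussianReal _ _)
    rw [← hX] at this
    simp at this
  have hset : {ω | X ω ≤ 0} = X ⁻¹' Set.Iic 0 := rfl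
  have hPeq : P {ω | X ω ≤ 0} = (gaussianReal lam1 ⟨lam2 ^ 2, sq_nonneg lam2⟩) (Set.Iic 0) := by
    rw [hset, ← Measure.map_apply_of_aemeasurable hXm measurableSet_Iic, hX]
  rcases eq_or_lt_of_le hlam2 with hz | hpos
  · -- lam2 = 0
    have hl : lam2l = 0 := le_antisymm (hub.trans hz.symm.le) hlb
    have hv : (⟨lam2 ^ 2, sq_nonneg lam2⟩ : NNReal) = 0 := by
      ext; simp [← hz]
    have hg : gaussianReal lam1 ⟨lam2 ^ 2, sq_nonneg lam2⟩ = Measure.dirac lam1 := by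
      rw [← gaussianReal_zero_var]; exact congrArg _ hv
    rw [hg] at hPeq
    have hlam1 : lam1 ≤ 0 := by
      by_contra hc
      push_neg at hc
      rw [Measure.dirac_apply' _ measurableSet_Iic] at hPeq
      have : lam1 ∉ Set.Iic 0 := by simpa using hc
      rw [Set.indicator_of_notMem this] at hPeq
      rw [hPeq] at hsat
      simp at hsat
      linarith
    rw [hl]
    simpa using hlam1
  · -- lam2 > 0
    have hne : lam2 ≠ 0 := hpos.ne'
    set v : NNReal := ⟨lam2 ^ 2, sq_nonneg lam2⟩ with hv
    set t : ℝ := -lam1 / lam2 with ht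
    -- standardization
    have hmul : (gaussianReal lam1 v).map (· * (1/lam2)) = gaussianReal (lam1/lam2) 1 := by
      rw [gaussianReal_map_mul_const]
      congr 1
      · field_simp
      · ext
        show (1 / lam2) ^ 2 * lam2 ^ 2 = (1:ℝ)
        field_simp
    have hstd : (gaussianReal lam1 v).map (fun x => x * (1/lam2) + (-lam1/lam2)) = gaussianReal 0 1 := by
      have : (fun x : ℝ => x * (1/lam2) + (-lam1/lam2)) =
          (fun y : ℝ => y + (-lam1/lam2)) ∘ (fun x : ℝ => x * (1/lam2)) := rfl
      rw [this, ← Measure.map_map (by fun_prop) (by fun_prop), hmul,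
        gaussianReal_map_add_const]
      congr 1
      ring
    -- cdf std at t equals measure of Iic 0
    have hcdf : cdf (gaussianReal 0 1) t = ((gaussianReal lam1 v) (Set.Iic 0)).toReal := by
      rw [cdf_eq_real, measureReal_def, ← hstd, Measure.map_apply (by fun_prop) measurableSet_Iic]
      congr 2
      ext x
      simp only [Set.mem_preimage, Set.mem_Iic, ht]
      rw [add_le_iff_nonpos_left]
      have hinv : (0:ℝ) < 1/lam2 := by positivity
      constructor
      · intro h; nlinarith
      · intro h; nlinarith
    have htin : p ≤ cdf (gaussianReal 0 1) t := by
      rw [hcdf, ← hPeq]; exact hsat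
    -- lower bound of the quantile set
    have hbdd : ∀ x ∈ {x : ℝ | p ≤ cdf (gaussianReal 0 1) x}, (0:ℝ) ≤ x := by
      intro x hx
      by_contra hc
      push_neg at hc
      have := (monotone_cdf (gaussianReal 0 1)) hc.le
      rw [std_half] at this
      have : p ≤ 1/2 := le_trans hx this
      have h05 : (0.5:ℝ) = 1/2 := by norm_num
      linarith
    have hne' : t ∈ {x : ℝ | p ≤ cdf (gaussianReal 0 1) x} := htin
    have hq_le : stdNormalQuantile p ≤ t := csInf_le ⟨0, hbdd⟩ hne'
    have hq_nonneg : 0 ≤ stdNormalQuantile p := le_csInf ⟨t, hne'⟩ hbdd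
    have h1 : stdNormalQuantile p * lam2l ≤ stdNormalQuantile p * lam2 :=
      mul_le_mul_of_nonneg_left hub hq_nonneg
    have h2 : stdNormalQuantile p * lam2 ≤ t * lam2 :=
      mul_le_mul_of_nonneg_right hq_le hlam2
    have h3 : t * lam2 = -lam1 := by rw [ht]; field_simp
    linarith
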